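/- Let {K; f₁,…,f_N} be a self-similar structure (each f_i: K → K injective continuous, with continuous surjection π_K: {1,…,N}^ℕ → K satisfying π_K ∘ W_k = f_k ∘ π_K), and suppose x ∈ K and I ∈ {1,…,N}^k satisfy f_I(x) ∈ X₀, where X₀ ⊂ K is a compact set containing the essential part S = {x : ∃ x', i ≠ j, f_i(x) = f_j(x')} and satisfying X₀ ⊂ ⋃_j f_j(X₀). Then x ∈ X₀. -/
import Mathlib


/-- Let {K; f₁,…,f_N} be a self-similar structure and X₀ ⊂ K a compact set containing the
essential part S and satisfying X₀ ⊆ ⋃ⱼ fⱼ(X₀). If f_I(x) ∈ X₀ for a finite word I, then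
x ∈ X₀. Here f_I, for I = (i₁,…,i_k), is the composition f_{i₁} ∘ … ∘ f_{i_k}. -/
theorem statement_19 {K : Type} [TopologicalSpace K] [CompactSpace K] [T2Space K] (N : ℕ)
    (f : Fin N → K → K) (hfc : ∀ i, Continuous (f i)) (hfi : ∀ i, Function.Injective (f i))
    (πK : (ℕ → Fin N) → K) (hπc : Continuous πK) (hπs : Function.Surjective πK)
    (hshift : ∀ (k : Fin N) (I : ℕ → Fin N),
      πK (fun i => match i with | 0 => k | Nat.succ j => I j) = f k (πK I))
    (X₀ : Set K) (hne : X₀.Nonempty) (hcomp : IsCompact X₀)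
    (hS : {x : K | ∃ (x' : K) (i j : Fin N), i ≠ j ∧ f i x = f j x'} ⊆ X₀)
    (hsub : X₀ ⊆ ⋃ j, f j '' X₀)
    (x : K) (w : List (Fin N)) (hx : w.foldr (fun i a => f i a) x ∈ X₀) :
    x ∈ X₀ := by
  induction w generalizing x with
  | nil => exact hx
  | cons i w ih =>
    apply ih
    set y := w.foldr (fun i a => f i a) x with hy
    have hy0 : f i y ∈ X₀ := hx
    obtain ⟨_, ⟨j, rfl⟩, x', hx', hfx⟩ := hsub hy0
    by_cases hij : i = j
    · subst hij
      exact (hfi i hfx.symm) ▸ hx'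
    · exact hS ⟨x', i, j, hij, hfx.symm⟩
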